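/- Gaussian moment estimate: Let B : ℝ^m × ℝ^m → ℝ be a symmetric bilinear form and f : [0,t₀] × ℝ^m → ℂ^k a C¹ map with |f(t,ξ)| ≤ C and |∂f/∂ξ_j(t,ξ)| ≤ C for all (t,ξ). Then as t ↘ 0, ∫_{ℝ^m} (4πt)^{−m/2} e^{−|ξ|²/(4t)} B(ξ,ξ) f(t,ξ) dξ = 2t · tr(B) · ∫_{ℝ^m} (4πt)^{−m/2} e^{−|ξ|²/(4t)} f(t,ξ) dξ + O(t^{3/2}), where the constant in the O(t^{3/2}) term depends only on C, m, and an upper bound on |B|. -/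

import Mathlib

open MeasureTheory Real

section GaussianMomentAux
open Set

lemma odd_int_zero (f : ℝ → ℝ) (hf : ∀ x, f (-x) = - f x) : ∫ x : ℝ, f x = 0 := by
  have h := integral_neg_eq_self f (μ := volume)
  simp only [hf, integral_neg] at h
  linarith

lemma int_x_gauss : ∫ x : ℝ, x * Real.exp (-x^2) = 0 := by
  apply odd_int_zero
  intro x; rw [neg_sq]; ring

lemma int_Ioi_x_sq_gauss : ∫ x in Ioi (0:ℝ), x^2 * Real.exp (-x^2) = Real.sqrt π / 4 := by
  have h32 : Real.Gamma (3/2) = Real.sqrt π / 2 := by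
    have : (3/2 : ℝ) = 1/2 + 1 := by norm_num
    rw [this, Real.Gamma_add_one (by norm_num), Real.Gamma_one_half_eq]; ring
  have hG : Real.Gamma (3/2) = ∫ x in Ioi (0:ℝ), Real.exp (-x) * x ^ ((3:ℝ)/2 - 1) :=
    Real.Gamma_eq_integral (by norm_num)
  rw [← integral_comp_rpow_Ioi_of_pos (g := fun x => Real.exp (-x) * x ^ ((3:ℝ)/2 - 1)) zero_lt_two] at hG
  rw [h32] at hG
  have : ∀ x ∈ Ioi (0:ℝ), (2 * x ^ ((2:ℝ) - 1)) • (Real.exp (-(x ^ (2:ℝ))) * (x ^ (2:ℝ)) ^ ((3:ℝ)/2 - 1))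
      = 2 * (x^2 * Real.exp (-x^2)) := by
    intro x hx
    have hx0 : (0:ℝ) < x := hx
    rw [smul_eq_mul, ← Real.rpow_natCast x 2]
    rw [← Real.rpow_mul hx0.le]
    norm_num
    ring
  rw [setIntegral_congr_fun measurableSet_Ioi this, integral_const_mul] at hG
  linarith

lemma integrable_x_sq_gauss : Integrable (fun x : ℝ => x^2 * Real.exp (-x^2)) := by
  have h := integrable_rpow_mul_exp_neg_mul_sq (b := 1) one_pos (s := 2) (by norm_num)
  simpa [Real.rpow_natCast] using h

lemma int_x_sq_gauss : ∫ x : ℝ, x^2 * Real.exp (-x^2) = Real.sqrt π / 2 := by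
  have hsplit := integral_add_compl (measurableSet_Ioi (a := (0:ℝ))) integrable_x_sq_gauss
  have hcompl : (Ioi (0:ℝ))ᶜ = Iic 0 := by simp
  have heven : ∫ x in Iic (0:ℝ), x^2 * Real.exp (-x^2) = ∫ x in Ioi (0:ℝ), x^2 * Real.exp (-x^2) := by
    have := integral_comp_neg_Ioi (c := (0:ℝ)) (f := fun x : ℝ => x^2 * Real.exp (-x^2))
    simp only [neg_neg, neg_sq, neg_zero] at this
    exact this.symm
  rw [hcompl, heven, int_Ioi_x_sq_gauss] at hsplit
  rw [← hsplit]; ring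

lemma int_gauss : ∫ x : ℝ, Real.exp (-x^2) = Real.sqrt π := by
  simpa using integral_gaussian 1

lemma euclid_moment2 (m : ℕ) (i j : Fin m) :
    ∫ u : EuclideanSpace ℝ (Fin m), Real.exp (-‖u‖^2) * (u i * u j)
      = if i = j then (Real.sqrt π)^m / 2 else 0 := by
  have hmp := (EuclideanSpace.volume_preserving_symm_measurableEquiv_toLp (Fin m)).symm
  rw [← hmp.integral_comp (MeasurableEquiv.measurableEmbedding _)]
  set g : Fin m → ℝ → ℝ := fun l y =>
    (if l = i then y else 1) * (if l = j then y else 1) * Real.exp (-y^2) with hg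
  have h1 : ∀ x : Fin m → ℝ,
      Real.exp (-‖(MeasurableEquiv.toLp 2 (Fin m → ℝ)) x‖^2)
        * ((MeasurableEquiv.toLp 2 (Fin m → ℝ)) x i
          * (MeasurableEquiv.toLp 2 (Fin m → ℝ)) x j)
      = ∏ l, g l (x l) := by
    intro x
    have hcoord : ∀ l : Fin m, ((MeasurableEquiv.toLp 2 (Fin m → ℝ)) x) l = x l := by
      intro l
      rfl
    have hnorm : ‖(MeasurableEquiv.toLp 2 (Fin m → ℝ)) x‖^2 = ∑ l, (x l)^2 := by
      rw [EuclideanSpace.norm_eq]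
      rw [Real.sq_sqrt (Finset.sum_nonneg fun l _ => sq_nonneg _)]
      simp [hcoord, sq_abs]
    rw [hnorm, hcoord, hcoord]
    simp only [hg]
    rw [Finset.prod_mul_distrib, Finset.prod_mul_distrib]
    rw [Finset.prod_ite_eq' Finset.univ i (fun l => x l),
        Finset.prod_ite_eq' Finset.univ j (fun l => x l)]
    rw [← Real.exp_sum]
    simp [Finset.sum_neg_distrib]
    ring
  calc (∫ x : Fin m → ℝ, (Real.exp (-‖(MeasurableEquiv.toLp 2 (Fin m → ℝ)) x‖^2)
        * ((MeasurableEquiv.toLp 2 (Fin m → ℝ)) x i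
          * (MeasurableEquiv.toLp 2 (Fin m → ℝ)) x j)))
      = ∫ x : Fin m → ℝ, ∏ l, g l (x l) := by
        congr 1; funext x; exact h1 x
    _ = ∏ l, ∫ y : ℝ, g l y := integral_fintype_prod_volume_eq_prod g
    _ = if i = j then (Real.sqrt π)^m / 2 else 0 := by
        by_cases hij : i = j
        · subst hij
          simp only [if_pos rfl]
          have hval : ∀ l : Fin m, ∫ y : ℝ, g l y
              = Real.sqrt π * (if l = i then (1:ℝ)/2 else 1) := by
            intro l
            by_cases hl : l = i
            · subst hl
              have : (fun y : ℝ => g l y) = fun y : ℝ => y^2 * Real.exp (-y^2) := by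
                funext y; simp [hg, sq]
              rw [this, int_x_sq_gauss, if_pos rfl]
              ring
            · have : (fun y : ℝ => g l y) = fun y : ℝ => Real.exp (-y^2) := by
                funext y; simp [hg, hl]
              rw [this, int_gauss, if_neg hl, mul_one]
          rw [Finset.prod_congr rfl (fun l _ => hval l)]
          rw [Finset.prod_mul_distrib, Finset.prod_const,
            Finset.prod_ite_eq' Finset.univ i (fun _ => (1:ℝ)/2)]
          simp [Finset.card_univ]
          ring
        · rw [if_neg hij]
          apply Finset.prod_eq_zero (Finset.mem_univ i)
          simp only [hg, if_pos rfl, if_neg hij, mul_one]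
          exact int_x_gauss

lemma euclid_gauss (m : ℕ) :
    ∫ u : EuclideanSpace ℝ (Fin m), Real.exp (-‖u‖^2) = (Real.sqrt π)^m := by
  have h := GaussianFourier.integral_rexp_neg_mul_sq_norm (V := EuclideanSpace ℝ (Fin m)) (b := 1) one_pos
  simp only [neg_mul, one_mul, div_one, finrank_euclideanSpace_fin] at h
  rw [h, Real.sqrt_eq_rpow, ← Real.rpow_natCast (π ^ ((1:ℝ)/2)) m, ← Real.rpow_mul pi_pos.le]
  congr 1
  ring

lemma pow_le_factorial_mul_exp {x : ℝ} (hx : 0 ≤ x) (p : ℕ) :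
    x ^ p ≤ p.factorial * Real.exp x := by
  have h1 : x ^ p / p.factorial ≤ Real.exp x := by
    calc x ^ p / p.factorial = ∑ i ∈ Finset.range (p+1), (if i = p then x ^ p / p.factorial else 0) := by
          rw [Finset.sum_ite_eq' (Finset.range (p+1)) p]
          simp
      _ ≤ ∑ i ∈ Finset.range (p+1), x ^ i / i.factorial := by
          apply Finset.sum_le_sum
          intro i hi
          by_cases h : i = p
          · subst h; simp
          · simp only [if_neg h]
            positivity
      _ ≤ Real.exp x := Real.sum_le_exp_of_nonneg hx _
  have hp : (0:ℝ) < p.factorial := by positivity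
  calc x ^ p = p.factorial * (x ^ p / p.factorial) := by field_simp
    _ ≤ p.factorial * Real.exp x := by
        exact mul_le_mul_of_nonneg_left h1 hp.le

lemma gauss_poly_ptwise (b : ℝ) (hb : 0 < b) (p : ℕ) {r : ℝ} (hr : 0 ≤ r) :
    r ^ p * Real.exp (-(b/2) * r^2) ≤ 1 + p.factorial * (2/b)^p := by
  have hfac : (0:ℝ) ≤ p.factorial * (2/b)^p := by positivity
  rcases le_or_gt r 1 with h1 | h1
  · have : r ^ p ≤ 1 := pow_le_one₀ hr h1
    have he : Real.exp (-(b/2) * r^2) ≤ 1 := by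
      rw [Real.exp_le_one_iff]
      nlinarith
    nlinarith [mul_le_one₀ this (Real.exp_nonneg _) he]
  · have h2 : r ^ p ≤ r ^ (2*p) := by
      apply pow_le_pow_right₀ h1.le
      omega
    have h3 : r ^ (2*p) = (2/b)^p * ((b/2) * r^2)^p := by
      have hinner : (2/b) * ((b/2) * r^2) = r^2 := by field_simp
      calc r^(2*p) = (r^2)^p := by rw [pow_mul]
        _ = ((2/b) * ((b/2)*r^2))^p := by rw [hinner]
        _ = (2/b)^p * ((b/2)*r^2)^p := mul_pow _ _ _
    have h4 : ((b/2) * r^2)^p ≤ p.factorial * Real.exp ((b/2) * r^2) := by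
      apply pow_le_factorial_mul_exp
      positivity
    have h5 : r ^ p * Real.exp (-(b/2) * r^2) ≤ (2/b)^p * p.factorial * (Real.exp ((b/2)*r^2) * Real.exp (-(b/2) * r^2)) := by
      calc r ^ p * Real.exp (-(b/2) * r^2) ≤ r ^ (2*p) * Real.exp (-(b/2) * r^2) := by
            apply mul_le_mul_of_nonneg_right h2 (Real.exp_nonneg _)
        _ = (2/b)^p * ((b/2) * r^2)^p * Real.exp (-(b/2) * r^2) := by rw [h3]
        _ ≤ (2/b)^p * (p.factorial * Real.exp ((b/2)*r^2)) * Real.exp (-(b/2) * r^2) := by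
            apply mul_le_mul_of_nonneg_right _ (Real.exp_nonneg _)
            apply mul_le_mul_of_nonneg_left h4 (by positivity)
        _ = (2/b)^p * p.factorial * (Real.exp ((b/2)*r^2) * Real.exp (-(b/2) * r^2)) := by ring
    rw [← Real.exp_add] at h5
    have hz : (b/2)*r^2 + -(b/2)*r^2 = 0 := by ring
    rw [hz, Real.exp_zero, mul_one] at h5
    nlinarith

lemma integrable_rexp_neg_mul_sq_norm_euclid (m : ℕ) {b : ℝ} (hb : 0 < b) :
    Integrable (fun u : EuclideanSpace ℝ (Fin m) => Real.exp (-b * ‖u‖^2)) := by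
  have h := GaussianFourier.integrable_cexp_neg_mul_sq_norm_add (V := EuclideanSpace ℝ (Fin m))
    (b := (b:ℂ)) (by simpa using hb) 0 0
  have h2 := h.re
  apply h2.congr
  filter_upwards with u
  have harg : (-(b:ℂ) * (‖u‖:ℂ)^2 + 0 * ((inner ℝ (0:EuclideanSpace ℝ (Fin m)) u : ℝ) : ℂ)) = ((-b * ‖u‖^2 : ℝ) : ℂ) := by
    push_cast; ring
  rw [harg, ← Complex.ofReal_exp]
  exact Complex.ofReal_re _

lemma integrable_gauss_poly (m : ℕ) {b : ℝ} (hb : 0 < b) (p : ℕ) :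
    Integrable (fun u : EuclideanSpace ℝ (Fin m) => Real.exp (-b * ‖u‖^2) * ‖u‖^p) := by
  have hbase := (integrable_rexp_neg_mul_sq_norm_euclid m (half_pos hb)).const_mul
    (1 + p.factorial * (2/b)^p)
  apply hbase.mono'
  · apply Continuous.aestronglyMeasurable
    continuity
  · filter_upwards with u
    have h1 : -b * ‖u‖^2 = -(b/2) * ‖u‖^2 + -(b/2) * ‖u‖^2 := by ring
    rw [Real.norm_eq_abs, abs_of_nonneg (by positivity), h1, Real.exp_add]
    have := gauss_poly_ptwise b hb p (norm_nonneg u)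
    calc Real.exp (-(b/2) * ‖u‖^2) * Real.exp (-(b/2) * ‖u‖^2) * ‖u‖^p
        = (‖u‖^p * Real.exp (-(b/2) * ‖u‖^2)) * Real.exp (-(b/2) * ‖u‖^2) := by ring
      _ ≤ (1 + p.factorial * (2/b)^p) * Real.exp (-(b/2) * ‖u‖^2) := by
          apply mul_le_mul_of_nonneg_right this (Real.exp_nonneg _)
      _ = (1 + p.factorial * (2/b)^p) * Real.exp (-(b/2) * ‖u‖^2) := rfl

lemma sqrt_four : Real.sqrt 4 = 2 := by
  rw [show (4:ℝ) = 2^2 by norm_num, Real.sqrt_sq (by norm_num : (0:ℝ) ≤ 2)]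

lemma const_id (m : ℕ) {t : ℝ} (ht : 0 < t) :
    (4*π*t)^(-(m:ℝ)/2) * (2*Real.sqrt t)^m = ((Real.sqrt π)^m)⁻¹ := by
  have h4πt : (0:ℝ) < 4*π*t := by positivity
  have hs : Real.sqrt (4*π*t) = 2 * Real.sqrt t * Real.sqrt π := by
    rw [show (4*π*t) = (4*t)*π by ring, Real.sqrt_mul (by positivity : (0:ℝ) ≤ 4*t),
      Real.sqrt_mul (by norm_num : (0:ℝ) ≤ 4), sqrt_four]
  have hrpow : (4*π*t)^(-(m:ℝ)/2) = ((Real.sqrt (4*π*t))^m)⁻¹ := by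
    rw [show (-(m:ℝ)/2) = -((m:ℝ)/2) by ring, Real.rpow_neg h4πt.le]
    congr 1
    rw [Real.sqrt_eq_rpow, ← Real.rpow_natCast ((4*π*t) ^ ((1:ℝ)/2)) m,
      ← Real.rpow_mul h4πt.le]
    congr 1; ring
  have hne : (2*Real.sqrt t)^m ≠ 0 := by
    have : (0:ℝ) < 2*Real.sqrt t := by positivity
    positivity
  rw [hrpow, hs, mul_pow, mul_inv]
  field_simp

lemma scale_integral (m : ℕ) {t : ℝ} (ht : 0 < t) (g : EuclideanSpace ℝ (Fin m) → ℝ) :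
    ∫ ξ : EuclideanSpace ℝ (Fin m), g ξ
      = (2*Real.sqrt t)^m * ∫ u : EuclideanSpace ℝ (Fin m), g ((2*Real.sqrt t) • u) := by
  have hR : (0:ℝ) ≤ 2*Real.sqrt t := by positivity
  have h := MeasureTheory.Measure.integral_comp_smul_of_nonneg
    (volume : Measure (EuclideanSpace ℝ (Fin m))) g (2*Real.sqrt t) (hR := hR)
  rw [finrank_euclideanSpace_fin] at h
  rw [h, smul_eq_mul, ← mul_assoc]
  have hne : ((2*Real.sqrt t)^m) ≠ 0 := by
    have : (0:ℝ) < 2*Real.sqrt t := by positivity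
    positivity
  rw [mul_inv_cancel₀ hne, one_mul]

lemma smul_coord (m : ℕ) (c : ℝ) (u : EuclideanSpace ℝ (Fin m)) (i : Fin m) :
    (c • u) i = c * u i := rfl

lemma smul_normsq (m : ℕ) {c : ℝ} (hc : 0 ≤ c) (u : EuclideanSpace ℝ (Fin m)) :
    ‖c • u‖^2 = c^2 * ‖u‖^2 := by
  rw [norm_smul, mul_pow, Real.norm_eq_abs, sq_abs]

lemma Rsq (t : ℝ) (ht : 0 < t) : (2*Real.sqrt t)^2 = 4*t := by
  rw [mul_pow, Real.sq_sqrt ht.le]; norm_num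
section A5
open MeasureTheory Real Set

lemma rho_int_one (m : ℕ) {t : ℝ} (ht : 0 < t) :
    ∫ ξ : EuclideanSpace ℝ (Fin m), (4*π*t)^(-(m:ℝ)/2) * Real.exp (-‖ξ‖^2/(4*t)) = 1 := by
  have hb : (0:ℝ) < (4*t)⁻¹ := by positivity
  have h := GaussianFourier.integral_rexp_neg_mul_sq_norm
    (V := EuclideanSpace ℝ (Fin m)) hb
  rw [finrank_euclideanSpace_fin] at h
  have h4πt : (0:ℝ) < 4*π*t := by positivity
  have harg : ∀ ξ : EuclideanSpace ℝ (Fin m),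
      -‖ξ‖^2/(4*t) = -(4*t)⁻¹ * ‖ξ‖^2 := by
    intro ξ; field_simp
  rw [integral_const_mul]
  simp_rw [harg]
  rw [h, show π / (4*t)⁻¹ = 4*π*t by field_simp]
  rw [← Real.rpow_add h4πt]
  rw [show (-(m:ℝ)/2 + (m:ℝ)/2) = 0 by ring, Real.rpow_zero]

lemma rho_moment2 (m : ℕ) {t : ℝ} (ht : 0 < t) (i j : Fin m) :
    ∫ ξ : EuclideanSpace ℝ (Fin m),
        (4*π*t)^(-(m:ℝ)/2) * Real.exp (-‖ξ‖^2/(4*t)) * (ξ i * ξ j)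
      = if i = j then 2*t else 0 := by
  set c := (4*π*t)^(-(m:ℝ)/2) with hc
  set R := 2*Real.sqrt t with hR
  have hR0 : (0:ℝ) < R := by rw [hR]; positivity
  rw [scale_integral m ht]
  have key : ∀ u : EuclideanSpace ℝ (Fin m),
      c * Real.exp (-‖R • u‖^2/(4*t)) * ((R • u) i * (R • u) j)
      = (c * (4*t)) * (Real.exp (-‖u‖^2) * (u i * u j)) := by
    intro u
    rw [smul_coord, smul_coord, smul_normsq m hR0.le u, Rsq t ht]
    rw [show -(4*t*‖u‖^2)/(4*t) = -‖u‖^2 by field_simp]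
    rw [show (R * u i) * (R * u j) = R^2 * (u i * u j) by ring, hR, Rsq t ht]
    ring
  rw [hR] at key
  simp_rw [key]
  rw [integral_const_mul, euclid_moment2 m i j]
  rw [← hR]
  by_cases hij : i = j
  · rw [if_pos hij, if_pos hij]
    have hconst := const_id m ht
    rw [← hR, ← hc] at hconst
    have hπ : (Real.sqrt π)^m ≠ 0 := by positivity
    field_simp at hconst ⊢
    nlinarith [hconst]
  · rw [if_neg hij, if_neg hij]
    ring

lemma rho_momentp (m p : ℕ) {t : ℝ} (ht : 0 < t) :
    ∫ ξ : EuclideanSpace ℝ (Fin m),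
        (4*π*t)^(-(m:ℝ)/2) * Real.exp (-‖ξ‖^2/(4*t)) * ‖ξ‖^p
      = (2*Real.sqrt t)^p *
          (((Real.sqrt π)^m)⁻¹ * ∫ u : EuclideanSpace ℝ (Fin m), Real.exp (-‖u‖^2) * ‖u‖^p) := by
  set c := (4*π*t)^(-(m:ℝ)/2) with hc
  set R := 2*Real.sqrt t with hR
  have hR0 : (0:ℝ) < R := by rw [hR]; positivity
  rw [scale_integral m ht]
  have key : ∀ u : EuclideanSpace ℝ (Fin m),
      c * Real.exp (-‖R • u‖^2/(4*t)) * ‖R • u‖^p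
      = (c * R^p) * (Real.exp (-‖u‖^2) * ‖u‖^p) := by
    intro u
    rw [smul_normsq m hR0.le u, Rsq t ht,
      show -(4*t*‖u‖^2)/(4*t) = -‖u‖^2 by field_simp]
    rw [norm_smul, Real.norm_eq_abs, abs_of_nonneg hR0.le, mul_pow]
    ring
  rw [hR] at key
  simp_rw [key]
  rw [integral_const_mul, ← hR]
  have hconst := const_id m ht
  rw [← hR, ← hc] at hconst
  rw [show R^m * (c * R^p * ∫ u : EuclideanSpace ℝ (Fin m), Real.exp (-‖u‖^2) * ‖u‖^p)
      = (c * R^m) * R^p * ∫ u : EuclideanSpace ℝ (Fin m), Real.exp (-‖u‖^2) * ‖u‖^p by ring,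
    hconst]
  ring

end A5
section A6
open MeasureTheory Real Set

lemma coord_abs_le_norm (m : ℕ) (ξ : EuclideanSpace ℝ (Fin m)) (i : Fin m) :
    |ξ i| ≤ ‖ξ‖ := by
  rw [EuclideanSpace.norm_eq, ← Real.sqrt_sq_eq_abs]
  apply Real.sqrt_le_sqrt
  have h := Finset.single_le_sum (f := fun j => ‖ξ j‖^2)
    (fun j _ => sq_nonneg _) (Finset.mem_univ i)
  simpa [Real.norm_eq_abs, sq_abs] using h

lemma slice_differentiable {m k : ℕ} {t₀ : ℝ}
    {f : ℝ → EuclideanSpace ℝ (Fin m) → EuclideanSpace ℂ (Fin k)}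
    (hf : ContDiffOn ℝ 1 (fun p : ℝ × EuclideanSpace ℝ (Fin m) => f p.1 p.2)
      (Set.Icc 0 t₀ ×ˢ Set.univ))
    {t : ℝ} (ht : t ∈ Set.Icc 0 t₀) :
    ∀ ξ, DifferentiableAt ℝ (f t) ξ := by
  intro ξ
  have hF : DifferentiableWithinAt ℝ (fun p : ℝ × EuclideanSpace ℝ (Fin m) => f p.1 p.2)
      (Set.Icc 0 t₀ ×ˢ Set.univ) (t, ξ) :=
    (hf.differentiableOn one_ne_zero) (t, ξ) (Set.mem_prod.mpr ⟨ht, Set.mem_univ ξ⟩)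
  have hg : DifferentiableAt ℝ (fun x : EuclideanSpace ℝ (Fin m) => ((t, x) : ℝ × EuclideanSpace ℝ (Fin m))) ξ :=
    (differentiableAt_const t).prodMk differentiableAt_id
  have hcomp := hF.comp ξ (hg.differentiableWithinAt (s := Set.univ))
    (fun x _ => Set.mem_prod.mpr ⟨ht, Set.mem_univ x⟩)
  rw [differentiableWithinAt_univ] at hcomp
  exact hcomp

lemma lipschitz_from_zero {m k : ℕ} {C : ℝ}
    {g : EuclideanSpace ℝ (Fin m) → EuclideanSpace ℂ (Fin k)}
    (hdiff : ∀ ξ, DifferentiableAt ℝ g ξ)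
    (hbd : ∀ ξ, ‖fderiv ℝ g ξ‖ ≤ C) (ξ : EuclideanSpace ℝ (Fin m)) :
    ‖g ξ - g 0‖ ≤ C * ‖ξ‖ := by
  have h := convex_univ.norm_image_sub_le_of_norm_fderiv_le
    (fun x (_ : x ∈ (Set.univ : Set (EuclideanSpace ℝ (Fin m)))) => hdiff x)
    (fun x _ => hbd x) (Set.mem_univ 0) (Set.mem_univ ξ)
  simpa using h

lemma integrable_of_gauss_bound (m : ℕ) (p : ℕ) {t : ℝ} (ht : 0 < t)
    {V : Type*} [NormedAddCommGroup V]
    (φ : EuclideanSpace ℝ (Fin m) → V) (c0 : ℝ) (hcont : Continuous φ)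
    (hb : ∀ ξ, ‖φ ξ‖ ≤ c0 * (Real.exp (-‖ξ‖^2/(4*t)) * ‖ξ‖^p)) :
    Integrable φ := by
  have h := (integrable_gauss_poly m (b := (4*t)⁻¹) (by positivity) p).const_mul c0
  apply h.mono' hcont.aestronglyMeasurable
  filter_upwards with ξ
  have harg : -(4*t)⁻¹ * ‖ξ‖^2 = -‖ξ‖^2/(4*t) := by field_simp
  rw [harg]
  exact hb ξ

end A6
open MeasureTheory Real

end GaussianMomentAux

set_option maxHeartbeats 2000000

/-- Gaussian moment estimate: for a symmetric bilinear form `B` (given by a symmetric matrix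
`A` with entries bounded by `Λ`) and a `C¹` map `f : [0,t₀] × ℝ^m → ℂ^k` (here `ℝ^k`-valued
vectors are replaced by `EuclideanSpace ℂ (Fin k)`) with `‖f‖, ‖∂f/∂ξ‖ ≤ C`, one has, as
`t ↘ 0`,
`∫ (4πt)^{-m/2} e^{-|ξ|²/4t} B(ξ,ξ) f(t,ξ) dξ
   = 2t·tr(B)·∫ (4πt)^{-m/2} e^{-|ξ|²/4t} f(t,ξ) dξ + O(t^{3/2})`,
with a constant depending only on `C`, `m` and `Λ`. -/
theorem gaussian_moment_estimate
    (m k : ℕ) (C Λ : ℝ) (hC : 0 ≤ C) (hΛ : 0 ≤ Λ) :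
    ∃ K : ℝ, 0 < K ∧ ∀ (t₀ : ℝ), 0 < t₀ →
      ∀ (A : Matrix (Fin m) (Fin m) ℝ), A.IsSymm → (∀ i j, |A i j| ≤ Λ) →
      ∀ (f : ℝ → EuclideanSpace ℝ (Fin m) → EuclideanSpace ℂ (Fin k)),
        ContDiffOn ℝ 1 (fun p : ℝ × EuclideanSpace ℝ (Fin m) => f p.1 p.2)
          (Set.Icc 0 t₀ ×ˢ Set.univ) →
        (∀ t ∈ Set.Icc (0:ℝ) t₀, ∀ ξ, ‖f t ξ‖ ≤ C ∧ ‖fderiv ℝ (f t) ξ‖ ≤ C) →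
        ∀ t ∈ Set.Ioc (0:ℝ) t₀,
          ‖(∫ ξ : EuclideanSpace ℝ (Fin m),
              ((4 * π * t) ^ (-(m:ℝ) / 2) * Real.exp (-‖ξ‖ ^ 2 / (4 * t))
                * ∑ i, ∑ j, A i j * ξ i * ξ j) • f t ξ)
            - (2 * t * A.trace) • ∫ ξ : EuclideanSpace ℝ (Fin m),
                ((4 * π * t) ^ (-(m:ℝ) / 2) * Real.exp (-‖ξ‖ ^ 2 / (4 * t))) • f t ξ‖
          ≤ K * t ^ ((3:ℝ) / 2) := by
  classical
  set invπ : ℝ := ((Real.sqrt π)^m)⁻¹ with hinvπ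
  set M3 : ℝ := ∫ u : EuclideanSpace ℝ (Fin m), Real.exp (-‖u‖^2) * ‖u‖^(3:ℕ) with hM3
  set M1 : ℝ := ∫ u : EuclideanSpace ℝ (Fin m), Real.exp (-‖u‖^2) * ‖u‖^(1:ℕ) with hM1
  have hM3nn : 0 ≤ M3 := integral_nonneg (fun u => by positivity)
  have hM1nn : 0 ≤ M1 := integral_nonneg (fun u => by positivity)
  have hinvπnn : 0 ≤ invπ := by positivity
  set K : ℝ := Λ*(m:ℝ)^2*C*8*(invπ*M3) + 4*(m:ℝ)*Λ*C*(invπ*M1) + 1 with hK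
  have hKterm3 : 0 ≤ Λ*(m:ℝ)^2*C*8*(invπ*M3) := by positivity
  have hKterm1 : 0 ≤ 4*(m:ℝ)*Λ*C*(invπ*M1) := by positivity
  refine ⟨K, by rw [hK]; linarith, ?_⟩
  intro t₀ ht₀ A _hAsymm hAbd f hf hfbd t htIoc
  obtain ⟨ht, htt₀⟩ := htIoc
  have htIcc : t ∈ Set.Icc (0:ℝ) t₀ := ⟨ht.le, htt₀⟩
  have hdiff : ∀ ξ, DifferentiableAt ℝ (f t) ξ := slice_differentiable hf htIcc
  have hcont : Continuous (f t) := by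
    have : Differentiable ℝ (f t) := fun ξ => hdiff ξ
    exact this.continuous
  have hfC : ∀ ξ, ‖f t ξ‖ ≤ C := fun ξ => (hfbd t htIcc ξ).1
  have hlip : ∀ ξ, ‖f t ξ - f t 0‖ ≤ C*‖ξ‖ :=
    lipschitz_from_zero hdiff (fun ξ => (hfbd t htIcc ξ).2)
  have hcρpos : 0 < (4*π*t) ^ (-(m:ℝ)/2) := Real.rpow_pos_of_pos (by positivity) _
  -- continuity of pieces
  have hexpcont : Continuous (fun ξ : EuclideanSpace ℝ (Fin m) =>
      (4*π*t) ^ (-(m:ℝ)/2) * Real.exp (-‖ξ‖^2/(4*t))) := by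
    apply Continuous.mul continuous_const
    apply Real.continuous_exp.comp
    exact ((continuous_norm.pow 2).neg).div_const _
  have hcoord : ∀ i : Fin m, Continuous (fun ξ : EuclideanSpace ℝ (Fin m) => ξ i) := by
    intro i
    exact (EuclideanSpace.proj i : EuclideanSpace ℝ (Fin m) →L[ℝ] ℝ).continuous
  have hQcont : Continuous (fun ξ : EuclideanSpace ℝ (Fin m) =>
      ∑ i, ∑ j, A i j * ξ i * ξ j) := by
    apply continuous_finset_sum
    intro i _
    apply continuous_finset_sum
    intro j _
    exact (continuous_const.mul (hcoord i)).mul (hcoord j)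
  -- bound on Q
  have hQabs : ∀ ξ : EuclideanSpace ℝ (Fin m),
      |∑ i, ∑ j, A i j * ξ i * ξ j| ≤ Λ*(m:ℝ)^2*‖ξ‖^2 := by
    intro ξ
    have h1 : |∑ i, ∑ j, A i j * ξ i * ξ j| ≤ ∑ i, ∑ j : Fin m, |A i j * ξ i * ξ j| := by
      calc |∑ i, ∑ j, A i j * ξ i * ξ j| ≤ ∑ i, |∑ j, A i j * ξ i * ξ j| :=
            Finset.abs_sum_le_sum_abs _ _
        _ ≤ ∑ i, ∑ j : Fin m, |A i j * ξ i * ξ j| :=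
            Finset.sum_le_sum (fun i _ => Finset.abs_sum_le_sum_abs _ _)
    have h2 : ∀ i j : Fin m, |A i j * ξ i * ξ j| ≤ Λ * ‖ξ‖ * ‖ξ‖ := by
      intro i j
      rw [abs_mul, abs_mul]
      have hi := coord_abs_le_norm m ξ i
      have hj := coord_abs_le_norm m ξ j
      have hA := hAbd i j
      have h0 : (0:ℝ) ≤ |ξ i| := abs_nonneg _
      have h0' : (0:ℝ) ≤ |ξ j| := abs_nonneg _
      have h0A : (0:ℝ) ≤ |A i j| := abs_nonneg _
      have hstep : |A i j| * |ξ i| ≤ Λ * ‖ξ‖ := mul_le_mul hA hi h0 hΛ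
      exact mul_le_mul hstep hj h0' (by positivity)
    calc |∑ i, ∑ j, A i j * ξ i * ξ j| ≤ ∑ i, ∑ j : Fin m, |A i j * ξ i * ξ j| := h1
      _ ≤ ∑ _i : Fin m, ∑ _j : Fin m, Λ * ‖ξ‖ * ‖ξ‖ :=
          Finset.sum_le_sum (fun i _ => Finset.sum_le_sum (fun j _ => h2 i j))
      _ = Λ*(m:ℝ)^2*‖ξ‖^2 := by
          rw [Finset.sum_const, Finset.sum_const, Finset.card_univ, Fintype.card_fin,
            nsmul_eq_mul, nsmul_eq_mul]
          ring
  have htr : |A.trace| ≤ (m:ℝ)*Λ := by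
    have : A.trace = ∑ i, A i i := by simp [Matrix.trace, Matrix.diag]
    rw [this]
    calc |∑ i, A i i| ≤ ∑ i, |A i i| := Finset.abs_sum_le_sum_abs _ _
      _ ≤ ∑ _i : Fin m, Λ := Finset.sum_le_sum (fun i _ => hAbd i i)
      _ = (m:ℝ)*Λ := by
          rw [Finset.sum_const, Finset.card_univ, Fintype.card_fin, nsmul_eq_mul]
  -- integrability
  have iρQf : Integrable (fun ξ : EuclideanSpace ℝ (Fin m) =>
      ((4*π*t) ^ (-(m:ℝ)/2) * Real.exp (-‖ξ‖^2/(4*t)) * ∑ i, ∑ j, A i j * ξ i * ξ j) • f t ξ) := by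
    apply integrable_of_gauss_bound m 2 ht _ ((4*π*t) ^ (-(m:ℝ)/2) * (Λ*(m:ℝ)^2*C))
      ((hexpcont.mul hQcont).smul hcont)
    intro ξ
    simp only [Pi.smul_apply', Pi.mul_apply, Pi.sub_apply, Pi.pow_apply]
    rw [norm_smul, Real.norm_eq_abs, abs_mul, abs_mul,
      abs_of_nonneg hcρpos.le, abs_of_nonneg (Real.exp_nonneg _)]
    calc (4*π*t) ^ (-(m:ℝ)/2) * Real.exp (-‖ξ‖^2/(4*t)) * |∑ i, ∑ j, A i j * ξ i * ξ j| * ‖f t ξ‖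
        ≤ (4*π*t) ^ (-(m:ℝ)/2) * Real.exp (-‖ξ‖^2/(4*t)) * (Λ*(m:ℝ)^2*‖ξ‖^2) * C := by
          apply mul_le_mul
          · exact mul_le_mul_of_nonneg_left (hQabs ξ) (by positivity)
          · exact hfC ξ
          · exact norm_nonneg _
          · positivity
      _ = (4*π*t) ^ (-(m:ℝ)/2) * (Λ*(m:ℝ)^2*C) * (Real.exp (-‖ξ‖^2/(4*t)) * ‖ξ‖^(2:ℕ)) := by ring
  have iρf : Integrable (fun ξ : EuclideanSpace ℝ (Fin m) =>
      ((4*π*t) ^ (-(m:ℝ)/2) * Real.exp (-‖ξ‖^2/(4*t))) • f t ξ) := by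
    apply integrable_of_gauss_bound m 0 ht _ ((4*π*t) ^ (-(m:ℝ)/2) * C)
      (hexpcont.smul hcont)
    intro ξ
    simp only [Pi.smul_apply', Pi.mul_apply, Pi.sub_apply, Pi.pow_apply]
    rw [norm_smul, Real.norm_eq_abs, abs_mul,
      abs_of_nonneg hcρpos.le, abs_of_nonneg (Real.exp_nonneg _), pow_zero, mul_one]
    calc (4*π*t) ^ (-(m:ℝ)/2) * Real.exp (-‖ξ‖^2/(4*t)) * ‖f t ξ‖
        ≤ (4*π*t) ^ (-(m:ℝ)/2) * Real.exp (-‖ξ‖^2/(4*t)) * C :=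
          mul_le_mul_of_nonneg_left (hfC ξ) (by positivity)
      _ = (4*π*t) ^ (-(m:ℝ)/2) * C * Real.exp (-‖ξ‖^2/(4*t)) := by ring
  have iρQ : Integrable (fun ξ : EuclideanSpace ℝ (Fin m) =>
      (4*π*t) ^ (-(m:ℝ)/2) * Real.exp (-‖ξ‖^2/(4*t)) * ∑ i, ∑ j, A i j * ξ i * ξ j) := by
    apply integrable_of_gauss_bound m 2 ht _ ((4*π*t) ^ (-(m:ℝ)/2) * (Λ*(m:ℝ)^2))
      (hexpcont.mul hQcont)
    intro ξ
    simp only [Pi.smul_apply', Pi.mul_apply, Pi.sub_apply, Pi.pow_apply]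
    rw [Real.norm_eq_abs, abs_mul, abs_mul,
      abs_of_nonneg hcρpos.le, abs_of_nonneg (Real.exp_nonneg _)]
    calc (4*π*t) ^ (-(m:ℝ)/2) * Real.exp (-‖ξ‖^2/(4*t)) * |∑ i, ∑ j, A i j * ξ i * ξ j|
        ≤ (4*π*t) ^ (-(m:ℝ)/2) * Real.exp (-‖ξ‖^2/(4*t)) * (Λ*(m:ℝ)^2*‖ξ‖^2) :=
          mul_le_mul_of_nonneg_left (hQabs ξ) (by positivity)
      _ = (4*π*t) ^ (-(m:ℝ)/2) * (Λ*(m:ℝ)^2) * (Real.exp (-‖ξ‖^2/(4*t)) * ‖ξ‖^(2:ℕ)) := by ring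
  have iρQr : Integrable (fun ξ : EuclideanSpace ℝ (Fin m) =>
      ((4*π*t) ^ (-(m:ℝ)/2) * Real.exp (-‖ξ‖^2/(4*t)) * ∑ i, ∑ j, A i j * ξ i * ξ j)
        • (f t ξ - f t 0)) := by
    apply integrable_of_gauss_bound m 3 ht _ ((4*π*t) ^ (-(m:ℝ)/2) * (Λ*(m:ℝ)^2*C))
      ((hexpcont.mul hQcont).smul (hcont.sub continuous_const))
    intro ξ
    simp only [Pi.smul_apply', Pi.mul_apply, Pi.sub_apply, Pi.pow_apply]
    rw [norm_smul, Real.norm_eq_abs, abs_mul, abs_mul,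
      abs_of_nonneg hcρpos.le, abs_of_nonneg (Real.exp_nonneg _)]
    calc (4*π*t) ^ (-(m:ℝ)/2) * Real.exp (-‖ξ‖^2/(4*t)) * |∑ i, ∑ j, A i j * ξ i * ξ j| * ‖f t ξ - f t 0‖
        ≤ (4*π*t) ^ (-(m:ℝ)/2) * Real.exp (-‖ξ‖^2/(4*t)) * (Λ*(m:ℝ)^2*‖ξ‖^2) * (C*‖ξ‖) := by
          apply mul_le_mul
          · exact mul_le_mul_of_nonneg_left (hQabs ξ) (by positivity)
          · exact hlip ξ
          · exact norm_nonneg _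
          · positivity
      _ = (4*π*t) ^ (-(m:ℝ)/2) * (Λ*(m:ℝ)^2*C) * (Real.exp (-‖ξ‖^2/(4*t)) * ‖ξ‖^(3:ℕ)) := by ring
  have iρr : Integrable (fun ξ : EuclideanSpace ℝ (Fin m) =>
      ((4*π*t) ^ (-(m:ℝ)/2) * Real.exp (-‖ξ‖^2/(4*t))) • (f t ξ - f t 0)) := by
    apply integrable_of_gauss_bound m 1 ht _ ((4*π*t) ^ (-(m:ℝ)/2) * C)
      (hexpcont.smul (hcont.sub continuous_const))
    intro ξ
    simp only [Pi.smul_apply', Pi.mul_apply, Pi.sub_apply, Pi.pow_apply]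
    rw [norm_smul, Real.norm_eq_abs, abs_mul,
      abs_of_nonneg hcρpos.le, abs_of_nonneg (Real.exp_nonneg _)]
    calc (4*π*t) ^ (-(m:ℝ)/2) * Real.exp (-‖ξ‖^2/(4*t)) * ‖f t ξ - f t 0‖
        ≤ (4*π*t) ^ (-(m:ℝ)/2) * Real.exp (-‖ξ‖^2/(4*t)) * (C*‖ξ‖) :=
          mul_le_mul_of_nonneg_left (hlip ξ) (by positivity)
      _ = (4*π*t) ^ (-(m:ℝ)/2) * C * (Real.exp (-‖ξ‖^2/(4*t)) * ‖ξ‖^(1:ℕ)) := by ring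
  have iρ3 : Integrable (fun ξ : EuclideanSpace ℝ (Fin m) =>
      (4*π*t) ^ (-(m:ℝ)/2) * Real.exp (-‖ξ‖^2/(4*t)) * ‖ξ‖^(3:ℕ)) := by
    apply integrable_of_gauss_bound m 3 ht _ ((4*π*t) ^ (-(m:ℝ)/2))
      (hexpcont.mul (continuous_norm.pow 3))
    intro ξ
    simp only [Pi.smul_apply', Pi.mul_apply, Pi.sub_apply, Pi.pow_apply]
    rw [Real.norm_eq_abs, abs_of_nonneg (by positivity)]
    rw [mul_assoc]
  have iρ1 : Integrable (fun ξ : EuclideanSpace ℝ (Fin m) =>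
      (4*π*t) ^ (-(m:ℝ)/2) * Real.exp (-‖ξ‖^2/(4*t)) * ‖ξ‖^(1:ℕ)) := by
    apply integrable_of_gauss_bound m 1 ht _ ((4*π*t) ^ (-(m:ℝ)/2))
      (hexpcont.mul (continuous_norm.pow 1))
    intro ξ
    simp only [Pi.smul_apply', Pi.mul_apply, Pi.sub_apply, Pi.pow_apply]
    rw [Real.norm_eq_abs, abs_of_nonneg (by positivity)]
    rw [mul_assoc]
  -- value of ∫ ρ Q
  have IρQ : (∫ ξ : EuclideanSpace ℝ (Fin m),
      (4*π*t) ^ (-(m:ℝ)/2) * Real.exp (-‖ξ‖^2/(4*t)) * ∑ i, ∑ j, A i j * ξ i * ξ j)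
      = 2*t*A.trace := by
    have hsum : ∀ ξ : EuclideanSpace ℝ (Fin m),
        (4*π*t) ^ (-(m:ℝ)/2) * Real.exp (-‖ξ‖^2/(4*t)) * ∑ i, ∑ j, A i j * ξ i * ξ j
        = ∑ p : Fin m × Fin m, A p.1 p.2 *
            ((4*π*t) ^ (-(m:ℝ)/2) * Real.exp (-‖ξ‖^2/(4*t)) * (ξ p.1 * ξ p.2)) := by
      intro ξ
      rw [Fintype.sum_prod_type, Finset.mul_sum]
      apply Finset.sum_congr rfl
      intro i _
      rw [Finset.mul_sum]
      apply Finset.sum_congr rfl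
      intro j _
      ring
    have iρij : ∀ i j : Fin m, Integrable (fun ξ : EuclideanSpace ℝ (Fin m) =>
        (4*π*t) ^ (-(m:ℝ)/2) * Real.exp (-‖ξ‖^2/(4*t)) * (ξ i * ξ j)) := by
      intro i j
      apply integrable_of_gauss_bound m 2 ht _ ((4*π*t) ^ (-(m:ℝ)/2))
        (hexpcont.mul ((hcoord i).mul (hcoord j)))
      intro ξ
      simp only [Pi.smul_apply', Pi.mul_apply, Pi.sub_apply, Pi.pow_apply]
      rw [Real.norm_eq_abs, abs_mul, abs_of_nonneg (mul_nonneg hcρpos.le (Real.exp_nonneg _))]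
      rw [mul_assoc]
      apply mul_le_mul_of_nonneg_left _ hcρpos.le
      apply mul_le_mul_of_nonneg_left _ (Real.exp_nonneg _)
      calc |ξ i * ξ j| = |ξ i| * |ξ j| := abs_mul _ _
        _ ≤ ‖ξ‖ * ‖ξ‖ := mul_le_mul (coord_abs_le_norm m ξ i) (coord_abs_le_norm m ξ j)
            (abs_nonneg _) (norm_nonneg _)
        _ = ‖ξ‖^(2:ℕ) := by ring
    calc (∫ ξ : EuclideanSpace ℝ (Fin m),
          (4*π*t) ^ (-(m:ℝ)/2) * Real.exp (-‖ξ‖^2/(4*t)) * ∑ i, ∑ j, A i j * ξ i * ξ j)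
        = ∫ ξ : EuclideanSpace ℝ (Fin m), ∑ p : Fin m × Fin m, A p.1 p.2 *
            ((4*π*t) ^ (-(m:ℝ)/2) * Real.exp (-‖ξ‖^2/(4*t)) * (ξ p.1 * ξ p.2)) := by
          exact integral_congr_ae (Filter.Eventually.of_forall hsum)
      _ = ∑ p : Fin m × Fin m, ∫ ξ : EuclideanSpace ℝ (Fin m), A p.1 p.2 *
            ((4*π*t) ^ (-(m:ℝ)/2) * Real.exp (-‖ξ‖^2/(4*t)) * (ξ p.1 * ξ p.2)) := by
          exact integral_finset_sum _ (fun p _ => (iρij p.1 p.2).const_mul _)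
      _ = ∑ p : Fin m × Fin m, A p.1 p.2 * (if p.1 = p.2 then 2*t else 0) := by
          apply Finset.sum_congr rfl
          intro p _
          rw [integral_const_mul, rho_moment2 m ht p.1 p.2]
      _ = ∑ p : Fin m × Fin m, (if p.1 = p.2 then 2*t*A p.1 p.2 else 0) := by
          apply Finset.sum_congr rfl
          intro p _
          by_cases h : p.1 = p.2 <;> simp [h] <;> ring
      _ = 2*t*A.trace := by
          rw [Fintype.sum_prod_type]
          have : ∀ i : Fin m, (∑ j : Fin m, if i = j then 2*t*A i j else 0) = 2*t*A i i := by
            intro i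
            rw [Finset.sum_ite_eq (Finset.univ : Finset (Fin m)) i (fun j => 2*t*A i j)]
            simp
          rw [Finset.sum_congr rfl (fun i _ => this i)]
          have : A.trace = ∑ i, A i i := by simp [Matrix.trace, Matrix.diag]
          rw [this, Finset.mul_sum]
  -- splitting identities
  have hI1 : (∫ ξ : EuclideanSpace ℝ (Fin m),
        ((4*π*t) ^ (-(m:ℝ)/2) * Real.exp (-‖ξ‖^2/(4*t)) * ∑ i, ∑ j, A i j * ξ i * ξ j) • f t ξ)
      = (2*t*A.trace) • f t 0 + ∫ ξ : EuclideanSpace ℝ (Fin m),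
          ((4*π*t) ^ (-(m:ℝ)/2) * Real.exp (-‖ξ‖^2/(4*t)) * ∑ i, ∑ j, A i j * ξ i * ξ j)
            • (f t ξ - f t 0) := by
    have hptw : ∀ ξ : EuclideanSpace ℝ (Fin m),
        ((4*π*t) ^ (-(m:ℝ)/2) * Real.exp (-‖ξ‖^2/(4*t)) * ∑ i, ∑ j, A i j * ξ i * ξ j) • f t ξ
        = ((4*π*t) ^ (-(m:ℝ)/2) * Real.exp (-‖ξ‖^2/(4*t)) * ∑ i, ∑ j, A i j * ξ i * ξ j) • f t 0
          + ((4*π*t) ^ (-(m:ℝ)/2) * Real.exp (-‖ξ‖^2/(4*t)) * ∑ i, ∑ j, A i j * ξ i * ξ j)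
            • (f t ξ - f t 0) := by
      intro ξ
      rw [← smul_add]
      congr 1
      abel
    rw [integral_congr_ae (Filter.Eventually.of_forall hptw)]
    rw [integral_add (iρQ.smul_const _) iρQr, integral_smul_const, IρQ]
  have hI2 : (∫ ξ : EuclideanSpace ℝ (Fin m),
        ((4*π*t) ^ (-(m:ℝ)/2) * Real.exp (-‖ξ‖^2/(4*t))) • f t ξ)
      = f t 0 + ∫ ξ : EuclideanSpace ℝ (Fin m),
          ((4*π*t) ^ (-(m:ℝ)/2) * Real.exp (-‖ξ‖^2/(4*t))) • (f t ξ - f t 0) := by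
    have hptw : ∀ ξ : EuclideanSpace ℝ (Fin m),
        ((4*π*t) ^ (-(m:ℝ)/2) * Real.exp (-‖ξ‖^2/(4*t))) • f t ξ
        = ((4*π*t) ^ (-(m:ℝ)/2) * Real.exp (-‖ξ‖^2/(4*t))) • f t 0
          + ((4*π*t) ^ (-(m:ℝ)/2) * Real.exp (-‖ξ‖^2/(4*t))) • (f t ξ - f t 0) := by
      intro ξ
      rw [← smul_add]
      congr 1
      abel
    have iρ0 : Integrable (fun ξ : EuclideanSpace ℝ (Fin m) =>
        (4*π*t) ^ (-(m:ℝ)/2) * Real.exp (-‖ξ‖^2/(4*t))) := by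
      apply integrable_of_gauss_bound m 0 ht _ ((4*π*t) ^ (-(m:ℝ)/2)) hexpcont
      intro ξ
      rw [Real.norm_eq_abs, abs_of_nonneg (by positivity), pow_zero, mul_one]
    rw [integral_congr_ae (Filter.Eventually.of_forall hptw)]
    rw [integral_add (iρ0.smul_const _) iρr, integral_smul_const, rho_int_one m ht, one_smul]
  -- moment values
  have hmom3 := rho_momentp m 3 ht
  have hmom1 := rho_momentp m 1 ht
  have h8 : (2*Real.sqrt t)^(3:ℕ) = 8 * t^((3:ℝ)/2) := by
    rw [mul_pow, ← Real.rpow_natCast (Real.sqrt t) 3, Real.sqrt_eq_rpow,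
      ← Real.rpow_mul ht.le]
    norm_num
  have h2 : (2*Real.sqrt t)^(1:ℕ) = 2 * t^((1:ℝ)/2) := by
    rw [pow_one, Real.sqrt_eq_rpow]
  have hthalf : t * t^((1:ℝ)/2) = t^((3:ℝ)/2) := by
    nth_rewrite 1 [← Real.rpow_one t]
    rw [← Real.rpow_add ht]
    norm_num
  have ht32nn : (0:ℝ) ≤ t^((3:ℝ)/2) := Real.rpow_nonneg ht.le _
  -- norm bounds
  have hX : ‖∫ ξ : EuclideanSpace ℝ (Fin m),
      ((4*π*t) ^ (-(m:ℝ)/2) * Real.exp (-‖ξ‖^2/(4*t)) * ∑ i, ∑ j, A i j * ξ i * ξ j)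
        • (f t ξ - f t 0)‖ ≤ Λ*(m:ℝ)^2*C*8*(invπ*M3) * t^((3:ℝ)/2) := by
    calc ‖∫ ξ : EuclideanSpace ℝ (Fin m),
        ((4*π*t) ^ (-(m:ℝ)/2) * Real.exp (-‖ξ‖^2/(4*t)) * ∑ i, ∑ j, A i j * ξ i * ξ j)
          • (f t ξ - f t 0)‖
        ≤ ∫ ξ : EuclideanSpace ℝ (Fin m),
            ‖((4*π*t) ^ (-(m:ℝ)/2) * Real.exp (-‖ξ‖^2/(4*t)) * ∑ i, ∑ j, A i j * ξ i * ξ j)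
              • (f t ξ - f t 0)‖ := norm_integral_le_integral_norm _
      _ ≤ ∫ ξ : EuclideanSpace ℝ (Fin m), (Λ*(m:ℝ)^2*C) *
            ((4*π*t) ^ (-(m:ℝ)/2) * Real.exp (-‖ξ‖^2/(4*t)) * ‖ξ‖^(3:ℕ)) := by
          apply integral_mono iρQr.norm (iρ3.const_mul _)
          intro ξ
          dsimp only
          rw [norm_smul, Real.norm_eq_abs, abs_mul, abs_mul,
            abs_of_nonneg hcρpos.le, abs_of_nonneg (Real.exp_nonneg _)]
          calc (4*π*t) ^ (-(m:ℝ)/2) * Real.exp (-‖ξ‖^2/(4*t)) * |∑ i, ∑ j, A i j * ξ i * ξ j|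
                * ‖f t ξ - f t 0‖
              ≤ (4*π*t) ^ (-(m:ℝ)/2) * Real.exp (-‖ξ‖^2/(4*t)) * (Λ*(m:ℝ)^2*‖ξ‖^2) * (C*‖ξ‖) := by
                apply mul_le_mul
                · exact mul_le_mul_of_nonneg_left (hQabs ξ) (by positivity)
                · exact hlip ξ
                · exact norm_nonneg _
                · positivity
            _ = (Λ*(m:ℝ)^2*C) * ((4*π*t) ^ (-(m:ℝ)/2) * Real.exp (-‖ξ‖^2/(4*t)) * ‖ξ‖^(3:ℕ)) := by
                ring
      _ = (Λ*(m:ℝ)^2*C) * ((2*Real.sqrt t)^(3:ℕ) * (invπ * M3)) := by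
          rw [integral_const_mul, hmom3]
      _ = Λ*(m:ℝ)^2*C*8*(invπ*M3) * t^((3:ℝ)/2) := by
          rw [h8]; ring
  have hY : ‖∫ ξ : EuclideanSpace ℝ (Fin m),
      ((4*π*t) ^ (-(m:ℝ)/2) * Real.exp (-‖ξ‖^2/(4*t))) • (f t ξ - f t 0)‖
      ≤ C * (2 * t^((1:ℝ)/2)) * (invπ*M1) := by
    calc ‖∫ ξ : EuclideanSpace ℝ (Fin m),
        ((4*π*t) ^ (-(m:ℝ)/2) * Real.exp (-‖ξ‖^2/(4*t))) • (f t ξ - f t 0)‖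
        ≤ ∫ ξ : EuclideanSpace ℝ (Fin m),
            ‖((4*π*t) ^ (-(m:ℝ)/2) * Real.exp (-‖ξ‖^2/(4*t))) • (f t ξ - f t 0)‖ :=
          norm_integral_le_integral_norm _
      _ ≤ ∫ ξ : EuclideanSpace ℝ (Fin m), C *
            ((4*π*t) ^ (-(m:ℝ)/2) * Real.exp (-‖ξ‖^2/(4*t)) * ‖ξ‖^(1:ℕ)) := by
          apply integral_mono iρr.norm (iρ1.const_mul _)
          intro ξ
          dsimp only
          rw [norm_smul, Real.norm_eq_abs, abs_mul,
            abs_of_nonneg hcρpos.le, abs_of_nonneg (Real.exp_nonneg _)]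
          calc (4*π*t) ^ (-(m:ℝ)/2) * Real.exp (-‖ξ‖^2/(4*t)) * ‖f t ξ - f t 0‖
              ≤ (4*π*t) ^ (-(m:ℝ)/2) * Real.exp (-‖ξ‖^2/(4*t)) * (C*‖ξ‖) :=
                mul_le_mul_of_nonneg_left (hlip ξ) (by positivity)
            _ = C * ((4*π*t) ^ (-(m:ℝ)/2) * Real.exp (-‖ξ‖^2/(4*t)) * ‖ξ‖^(1:ℕ)) := by ring
      _ = C * ((2*Real.sqrt t)^(1:ℕ) * (invπ * M1)) := by
          rw [integral_const_mul, hmom1]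
      _ = C * (2 * t^((1:ℝ)/2)) * (invπ*M1) := by rw [h2]; ring
  -- final assembly
  rw [hI1, hI2, smul_add]
  have hrearr : ∀ (a X b Y : EuclideanSpace ℂ (Fin k)), a = b →
      (a + X) - (b + Y) = X - Y := by
    intro a X b Y hab
    rw [hab]; abel
  rw [hrearr _ _ _ _ rfl]
  calc ‖(∫ ξ : EuclideanSpace ℝ (Fin m),
        ((4*π*t) ^ (-(m:ℝ)/2) * Real.exp (-‖ξ‖^2/(4*t)) * ∑ i, ∑ j, A i j * ξ i * ξ j)
          • (f t ξ - f t 0))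
      - (2*t*A.trace) • ∫ ξ : EuclideanSpace ℝ (Fin m),
          ((4*π*t) ^ (-(m:ℝ)/2) * Real.exp (-‖ξ‖^2/(4*t))) • (f t ξ - f t 0)‖
      ≤ ‖∫ ξ : EuclideanSpace ℝ (Fin m),
          ((4*π*t) ^ (-(m:ℝ)/2) * Real.exp (-‖ξ‖^2/(4*t)) * ∑ i, ∑ j, A i j * ξ i * ξ j)
            • (f t ξ - f t 0)‖
        + ‖(2*t*A.trace) • ∫ ξ : EuclideanSpace ℝ (Fin m),
            ((4*π*t) ^ (-(m:ℝ)/2) * Real.exp (-‖ξ‖^2/(4*t))) • (f t ξ - f t 0)‖ :=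
        norm_sub_le _ _
    _ ≤ Λ*(m:ℝ)^2*C*8*(invπ*M3) * t^((3:ℝ)/2)
        + (2*t*((m:ℝ)*Λ)) * (C * (2 * t^((1:ℝ)/2)) * (invπ*M1)) := by
        apply add_le_add hX
        rw [norm_smul, Real.norm_eq_abs]
        apply mul_le_mul
        · calc |2*t*A.trace| = 2*t*|A.trace| := by
                rw [abs_mul, abs_of_nonneg (by positivity : (0:ℝ) ≤ 2*t)]
            _ ≤ 2*t*((m:ℝ)*Λ) := by
                apply mul_le_mul_of_nonneg_left htr (by positivity)
        · exact hY
        · exact norm_nonneg _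
        · positivity
    _ ≤ K * t^((3:ℝ)/2) := by
        have hexp : (2*t*((m:ℝ)*Λ)) * (C * (2 * t^((1:ℝ)/2)) * (invπ*M1))
            = 4*(m:ℝ)*Λ*C*(invπ*M1) * t^((3:ℝ)/2) := by
          rw [← hthalf]; ring
        rw [hexp, hK]
        nlinarith [ht32nn, hKterm3, hKterm1]
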